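/- arXiv:2506.01509 — 3 statements merged into one kernel-verified Lean document; each statement's English description precedes it below -/
import Mathlib

section
/- For every linear objective c with nonnegative coefficients on all of the variables (y^i), (δ^i), (d^i) (and not involving the γ variables), the infimum of c over the region D_k equals the infimum of c over the polyhedron Q_k; in particular, from an optimal solution of the LP min{c over Q_k} one obtains an optimal solution of the LP min{c over D_k}. -/
/-- A finite graph: a finite vertex set and a finite set of (oriented representatives of) edges. -/
structure FinGraph (α : Type*) where
  verts : Finset α
  edges : Finset (α × α)

namespace FinGraph

variable {α : Type*}

/-- A matching: a set of edges of `G` that are pairwise vertex-disjoint. -/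
def IsMatching (G : FinGraph α) (M : Finset (α × α)) : Prop :=
  M ⊆ G.edges ∧ ∀ e ∈ M, ∀ f ∈ M, e ≠ f →
    e.1 ≠ f.1 ∧ e.1 ≠ f.2 ∧ e.2 ≠ f.1 ∧ e.2 ≠ f.2

open Classical in
/-- `ν(G)`: the maximum cardinality of a matching of `G`. -/
noncomputable def nu (G : FinGraph α) : ℕ :=
  (G.edges.powerset.filter fun M => G.IsMatching M).sup Finset.card

/-- Well-formedness: edges join two distinct vertices of the graph. -/
def WF (G : FinGraph α) : Prop :=
  ∀ e ∈ G.edges, e.1 ∈ G.verts ∧ e.2 ∈ G.verts ∧ e.1 ≠ e.2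

/-- `G` is bipartite with parts `V1`, `V2` (edges oriented from `V1` to `V2`). -/
def Bipartition [DecidableEq α] (G : FinGraph α) (V1 V2 : Finset α) : Prop :=
  G.verts ⊆ V1 ∪ V2 ∧ ∀ e ∈ G.edges, e.1 ∈ V1 ∧ e.2 ∈ V2

/-- The core of the assignment game on `G`: minimum fractional vertex covers of value `ν(G)`. -/
noncomputable def core (G : FinGraph α) : Set (α → ℝ) :=
  {y | (∀ v ∈ G.verts, 0 ≤ y v) ∧ (∀ e ∈ G.edges, 1 ≤ y e.1 + y e.2) ∧
    ∑ v ∈ G.verts, y v = (G.nu : ℝ)}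

/-- The subgraph of `G` induced by the vertex set `U`. -/
def induce [DecidableEq α] (G : FinGraph α) (U : Finset α) : FinGraph α :=
  ⟨G.verts ∩ U, G.edges.filter fun e => e.1 ∈ U ∧ e.2 ∈ U⟩

end FinGraph

/-- A real number is integral if it is an integer. -/
def IntegralReal (x : ℝ) : Prop := ∃ n : ℤ, x = (n : ℝ)

open FinGraph

variable {α : Type*}

/-- A point of the multistage LP: stage allocations `y^i` (`i = 0, …, k-1`, zero-based) and
deviation variables `δ^i`, `d^i` (`i = 0, …, k-2`) linking consecutive stages. -/
abbrev MultiStagePt (α : Type*) : Type _ :=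
  (ℕ → α → ℝ) × (ℕ → α → ℝ) × (ℕ → α → ℝ)

/-- The relaxed feasible region `D_k` of the multistage LP (no matching-number equalities). -/
def regionDk [DecidableEq α] (k : ℕ) (G : ℕ → FinGraph α) :
    Set (MultiStagePt α) :=
  {p | (∀ i < k, (∀ v ∈ (G i).verts, 0 ≤ p.1 i v) ∧
         (∀ e ∈ (G i).edges, 1 ≤ p.1 i e.1 + p.1 i e.2)) ∧
       (∀ i, i + 1 < k → ∀ v ∈ (G i).verts ∩ (G (i + 1)).verts,
         p.1 i v - p.1 (i + 1) v ≤ p.2.1 i v ∧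
         p.1 (i + 1) v - p.1 i v ≤ p.2.2 i v ∧
         0 ≤ p.2.1 i v ∧ 0 ≤ p.2.2 i v)}

/-- The feasible region `P_k` of the multistage LP: `D_k` together with the matching-number
equalities. -/
noncomputable def regionPk [DecidableEq α] (k : ℕ) (G : ℕ → FinGraph α) :
    Set (MultiStagePt α) :=
  {p ∈ regionDk k G | ∀ i < k, ∑ v ∈ (G i).verts, p.1 i v = ((G i).nu : ℝ)}

/-- The multistage dual-flow polyhedron `Q_k`: points of `D_k` extended by potentials `γ^i`. -/
def regionQk [DecidableEq α] (k : ℕ) (G : ℕ → FinGraph α) (Vs Vt : Finset α) :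
    Set (MultiStagePt α × (ℕ → α → ℝ)) :=
  {q | (∀ i < k, ∀ v ∈ (G i).verts ∩ Vs, 1 ≤ q.2 i v + q.1.1 i v) ∧
       (∀ i, i + 1 < k → ∀ v ∈ ((G i).verts ∩ (G (i + 1)).verts) ∩ Vs,
          0 ≤ q.2 i v - q.2 (i + 1) v + q.1.2.1 i v ∧
          0 ≤ q.2 (i + 1) v - q.2 i v + q.1.2.2 i v) ∧
       (∀ i < k, ∀ e ∈ (G i).edges, e.1 ∈ Vs → e.2 ∈ Vt →
          0 ≤ q.2 i e.2 - q.2 i e.1) ∧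
       (∀ i < k, ∀ v ∈ (G i).verts ∩ Vt, 0 ≤ q.1.1 i v - q.2 i v) ∧
       (∀ i, i + 1 < k → ∀ v ∈ ((G i).verts ∩ (G (i + 1)).verts) ∩ Vt,
          0 ≤ q.2 (i + 1) v - q.2 i v + q.1.2.1 i v ∧
          0 ≤ q.2 i v - q.2 (i + 1) v + q.1.2.2 i v) ∧
       (∀ i < k, ∀ v ∈ (G i).verts, 0 ≤ q.1.1 i v) ∧
       (∀ i, i + 1 < k → ∀ v ∈ (G i).verts ∩ (G (i + 1)).verts,
          0 ≤ q.1.2.1 i v ∧ 0 ≤ q.1.2.2 i v)}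

/-- A linear objective on the multistage variables `(y^i, δ^i, d^i)`, with coefficient functions
`cy`, `cδ`, `cd`. -/
def objCk [DecidableEq α] (k : ℕ) (G : ℕ → FinGraph α)
    (cy cδ cd : ℕ → α → ℝ) (p : MultiStagePt α) : ℝ :=
  ∑ i ∈ Finset.range k, ∑ v ∈ (G i).verts, cy i v * p.1 i v
    + ∑ i ∈ Finset.range (k - 1), ∑ v ∈ (G i).verts ∩ (G (i + 1)).verts,
        (cδ i v * p.2.1 i v + cd i v * p.2.2 i v)

private lemma max_sub_max_le {a b c : ℝ} (h : a - b ≤ c) (hc : 0 ≤ c) :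
    max 0 a - max 0 b ≤ c := by
  have h1 : (0:ℝ) ≤ max 0 b := le_max_left 0 b
  have h2 : b ≤ max 0 b := le_max_right 0 b
  have : max 0 a ≤ max 0 b + c := max_le (by linarith) (by linarith)
  linarith

/-- For every linear objective `c` with nonnegative coefficients on the
variables `(y^i, δ^i, d^i)` (and not involving the `γ` variables), the infimum of `c` over the
region `D_k` equals the infimum of `c` over the multistage dual-flow polyhedron `Q_k`. -/
theorem sInf_objCk_regionDk_eq_regionQk [DecidableEq α]
    (k : ℕ) (hk : 1 ≤ k) (G : ℕ → FinGraph α) (Vs Vt : Finset α)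
    (hdisj : Disjoint Vs Vt)
    (hWF : ∀ i < k, (G i).WF) (hbip : ∀ i < k, (G i).Bipartition Vs Vt)
    (cy cδ cd : ℕ → α → ℝ)
    (hcy : ∀ i < k, ∀ v ∈ (G i).verts, 0 ≤ cy i v)
    (hcδ : ∀ i, i + 1 < k → ∀ v ∈ (G i).verts ∩ (G (i + 1)).verts, 0 ≤ cδ i v)
    (hcd : ∀ i, i + 1 < k → ∀ v ∈ (G i).verts ∩ (G (i + 1)).verts, 0 ≤ cd i v) :
    sInf (objCk k G cy cδ cd '' regionDk k G) =
      sInf ((fun q => objCk k G cy cδ cd q.1) '' regionQk k G Vs Vt) := by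
  set c := objCk k G cy cδ cd with hcdef
  -- Direction: every point of D_k extends to Q_k with the same objective value.
  have hDQ : ∀ p ∈ regionDk k G,
      (p, fun i v => if v ∈ Vs then 1 - p.1 i v else p.1 i v)
        ∈ regionQk k G Vs Vt := by
    rintro ⟨y, δ, d⟩ hp
    obtain ⟨h1, h2⟩ := hp
    refine ⟨?_, ?_, ?_, ?_, ?_, ?_, ?_⟩
    · intro i hi v hv
      rw [Finset.mem_inter] at hv
      simp [hv.2]
    · intro i hi v hv
      rw [Finset.mem_inter] at hv
      have hd := h2 i hi v hv.1
      simp only [hv.2, if_true]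
      constructor <;> linarith [hd.1, hd.2.1]
    · intro i hi e he h1s h2t
      have hne : e.2 ∉ Vs := Finset.disjoint_right.mp hdisj h2t
      have hedge := (h1 i hi).2 e he
      simp only [h1s, if_true, hne, if_false]
      linarith
    · intro i hi v hv
      rw [Finset.mem_inter] at hv
      have hne : v ∉ Vs := Finset.disjoint_right.mp hdisj hv.2
      simp [hne]
    · intro i hi v hv
      rw [Finset.mem_inter, Finset.mem_inter] at hv
      have hne : v ∉ Vs := Finset.disjoint_right.mp hdisj hv.2
      have hd := h2 i hi v (Finset.mem_inter.mpr hv.1)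
      simp only [hne, if_false]
      constructor <;> linarith [hd.1, hd.2.1]
    · intro i hi v hv
      exact (h1 i hi).1 v hv
    · intro i hi v hv
      have hd := h2 i hi v hv
      exact ⟨hd.2.2.1, hd.2.2.2⟩
  -- Direction: every point of Q_k dominates a point of D_k.
  have hQD : ∀ q ∈ regionQk k G Vs Vt, ∃ p ∈ regionDk k G, c p ≤ c q.1 := by
    rintro ⟨⟨y, δ, d⟩, γ⟩ hq
    obtain ⟨q1, q2, q3, q4, q5, q6, q7⟩ := hq
    set yt : ℕ → α → ℝ := fun i v =>
      if v ∈ Vs then max 0 (1 - γ i v)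
      else if v ∈ Vt then max 0 (γ i v) else y i v with hyt
    have hmemVt : ∀ i < k, ∀ v ∈ (G i).verts, v ∉ Vs → v ∈ Vt := by
      intro i hi v hv hvs
      rcases Finset.mem_union.mp ((hbip i hi).1 hv) with h | h
      · exact absurd h hvs
      · exact h
    have hle : ∀ i < k, ∀ v ∈ (G i).verts, yt i v ≤ y i v := by
      intro i hi v hv
      have h0 := q6 i hi v hv
      by_cases hvs : v ∈ Vs
      · have := q1 i hi v (Finset.mem_inter.mpr ⟨hv, hvs⟩)
        simp only [hyt, hvs, if_true]
        exact max_le h0 (by linarith)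
      · have hvt := hmemVt i hi v hv hvs
        have := q4 i hi v (Finset.mem_inter.mpr ⟨hv, hvt⟩)
        simp only [hyt, hvs, if_false, hvt, if_true]
        exact max_le h0 (by linarith)
    refine ⟨(yt, δ, d), ⟨?_, ?_⟩, ?_⟩
    · intro i hi
      constructor
      · intro v hv
        by_cases hvs : v ∈ Vs
        · simp [hyt, hvs]
        · have hvt := hmemVt i hi v hv hvs
          simp [hyt, hvs, hvt]
      · intro e he
        have hb := (hbip i hi).2 e he
        have h1s := hb.1
        have h2t := hb.2
        have h2ns : e.2 ∉ Vs := Finset.disjoint_right.mp hdisj h2t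
        have hg := q3 i hi e he h1s h2t
        simp only [hyt, h1s, if_true, h2ns, if_false, h2t]
        have ha := le_max_right (0:ℝ) (1 - γ i e.1)
        have hb2 := le_max_right (0:ℝ) (γ i e.2)
        linarith
    · intro i hi v hv
      have hik : i < k := Nat.lt_of_succ_lt hi
      have hik1 : i + 1 < k := hi
      rw [Finset.mem_inter] at hv
      obtain ⟨hd1, hd2⟩ := q7 i hi v (Finset.mem_inter.mpr hv)
      by_cases hvs : v ∈ Vs
      · have hqs := q2 i hi v (Finset.mem_inter.mpr ⟨Finset.mem_inter.mpr hv, hvs⟩)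
        simp only [hyt, hvs, if_true]
        refine ⟨?_, ?_, hd1, hd2⟩
        · exact max_sub_max_le (by linarith [hqs.1]) hd1
        · exact max_sub_max_le (by linarith [hqs.2]) hd2
      · have hvt := hmemVt i hik v hv.1 hvs
        have hqs := q5 i hi v (Finset.mem_inter.mpr ⟨Finset.mem_inter.mpr hv, hvt⟩)
        simp only [hyt, hvs, if_false, hvt, if_true]
        refine ⟨?_, ?_, hd1, hd2⟩
        · exact max_sub_max_le (by linarith [hqs.1]) hd1
        · exact max_sub_max_le (by linarith [hqs.2]) hd2
    · simp only [hcdef, objCk]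
      apply add_le_add _ le_rfl
      apply Finset.sum_le_sum
      intro i hi
      apply Finset.sum_le_sum
      intro v hv
      exact mul_le_mul_of_nonneg_left (hle i (Finset.mem_range.mp hi) v hv)
        (hcy i (Finset.mem_range.mp hi) v hv)
  -- D_k is nonempty.
  have hne : ((fun _ _ => (1:ℝ), fun _ _ => (0:ℝ), fun _ _ => (0:ℝ)) : MultiStagePt α)
      ∈ regionDk k G := by
    refine ⟨fun i hi => ⟨fun v hv => zero_le_one, fun e he => by norm_num⟩, ?_⟩
    intro i hi v hv
    norm_num
  have hAB : c '' regionDk k G ⊆ (fun q => c q.1) '' regionQk k G Vs Vt := by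
    rintro x ⟨p, hp, rfl⟩
    exact ⟨(p, _), hDQ p hp, rfl⟩
  have hBA : ∀ b ∈ (fun q => c q.1) '' regionQk k G Vs Vt,
      ∃ a ∈ c '' regionDk k G, a ≤ b := by
    rintro b ⟨q, hq, rfl⟩
    obtain ⟨p, hp, hple⟩ := hQD q hq
    exact ⟨c p, ⟨p, hp, rfl⟩, hple⟩
  have hAne : (c '' regionDk k G).Nonempty := ⟨_, _, hne, rfl⟩
  have hBne : ((fun q => c q.1) '' regionQk k G Vs Vt).Nonempty := hAne.mono hAB
  by_cases hbdd : BddBelow (c '' regionDk k G)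
  · have hBbdd : BddBelow ((fun q => c q.1) '' regionQk k G Vs Vt) := by
      obtain ⟨m, hm⟩ := hbdd
      refine ⟨m, fun b hb => ?_⟩
      obtain ⟨a, ha, h⟩ := hBA b hb
      exact (hm ha).trans h
    apply le_antisymm
    · refine le_csInf hBne fun b hb => ?_
      obtain ⟨a, ha, h⟩ := hBA b hb
      exact (csInf_le hbdd ha).trans h
    · exact csInf_le_csInf hBbdd hAne hAB
  · have hBbdd : ¬ BddBelow ((fun q => c q.1) '' regionQk k G Vs Vt) := by
      rintro ⟨m, hm⟩
      exact hbdd ⟨m, fun a ha => hm (hAB ha)⟩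
    rw [Real.sInf_of_not_bddBelow hbdd, Real.sInf_of_not_bddBelow hBbdd]
end

section
/- Let α^i ∈ ℝ^{V_i} be arbitrary for i = 1,…,k, β^i, b^i ∈ ℝ^{V_i∩V_{i+1}} nonnegative for i = 1,…,k−1, and set ε = 1/(1 + Σ_{i=1}^k Σ_{v∈V_i}|α^i_v| + Σ_{i=1}^{k−1} Σ_{v∈V_i∩V_{i+1}}(β^i_v + b^i_v)). If μ̂ = ((ŷ^i), (δ̂^i), (d̂^i)) is an integral (all coordinates integer) minimizer over the region D_k of the objective F_ε(μ) = Σ_{i=1}^k Σ_{v∈V_i} y^i_v + ε·(Σ_{i=1}^k Σ_{v∈V_i} α^i_v y^i_v + Σ_{i=1}^{k−1} Σ_{v∈V_i∩V_{i+1}} (β^i_v δ^i_v + b^i_v d^i_v)), then μ̂ satisfies Σ_{v∈V_i} ŷ^i_v = ν(G_i) for all i (hence μ̂ ∈ P_k), and μ̂ minimizes G(μ) = Σ_{i=1}^k Σ_{v∈V_i} α^i_v y^i_v + Σ_{i=1}^{k−1} Σ_{v∈V_i∩V_{i+1}} (β^i_v δ^i_v + b^i_v d^i_v) over P_k. -/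
open FinGraph

variable {α : Type*}

section AuxKonig

open FinGraph Finset

variable {α : Type*} [DecidableEq α]

/-- any matching has card at most nu -/
lemma card_le_nu {G : FinGraph α} {M : Finset (α × α)} (hM : G.IsMatching M) :
    M.card ≤ G.nu := by
  classical
  apply Finset.le_sup
  simp only [Finset.mem_filter, Finset.mem_powerset]
  exact ⟨hM.1, hM⟩

/-- there is a matching attaining nu -/
lemma exists_max_matching (G : FinGraph α) :
    ∃ M, G.IsMatching M ∧ M.card = G.nu := by
  classical
  have hne : (G.edges.powerset.filter fun M => G.IsMatching M).Nonempty := by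
    refine ⟨∅, ?_⟩
    simp only [Finset.mem_filter, Finset.mem_powerset]
    exact ⟨Finset.empty_subset _, Finset.empty_subset _, by simp⟩
  obtain ⟨M, hM, hcard⟩ := Finset.exists_mem_eq_sup _ hne Finset.card
  simp only [Finset.mem_filter, Finset.mem_powerset] at hM
  exact ⟨M, hM.2, hcard.symm⟩

/-- weak LP duality -/
lemma nu_le_frac_cover (G : FinGraph α) (hWF : G.WF) (y : α → ℝ)
    (h0 : ∀ v ∈ G.verts, 0 ≤ y v) (h1 : ∀ e ∈ G.edges, 1 ≤ y e.1 + y e.2) :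
    (G.nu : ℝ) ≤ ∑ v ∈ G.verts, y v := by
  classical
  obtain ⟨M, hM, hcard⟩ := exists_max_matching G
  set S : Finset α := M.biUnion (fun e => {e.1, e.2}) with hS
  have hSsub : S ⊆ G.verts := by
    intro v hv
    simp only [hS, Finset.mem_biUnion, Finset.mem_insert, Finset.mem_singleton] at hv
    obtain ⟨e, heM, hv⟩ := hv
    have := hWF e (hM.1 heM)
    rcases hv with rfl | rfl
    · exact this.1
    · exact this.2.1
  have hdisj : (M : Set (α × α)).PairwiseDisjoint (fun e => ({e.1, e.2} : Finset α)) := by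
    intro e he f hf hef
    have h4 := hM.2 e he f hf hef
    simp only [Finset.disjoint_left, Finset.mem_insert, Finset.mem_singleton]
    rintro v (rfl | rfl) hv <;> rcases hv with h | h <;> simp_all
  have hsum : ∑ v ∈ S, y v = ∑ e ∈ M, (y e.1 + y e.2) := by
    rw [hS, Finset.sum_biUnion hdisj]
    refine Finset.sum_congr rfl fun e he => ?_
    rw [Finset.sum_pair (hWF e (hM.1 he)).2.2]
  calc (G.nu : ℝ) = (M.card : ℝ) := by rw [hcard]
    _ = ∑ _e ∈ M, (1 : ℝ) := by simp
    _ ≤ ∑ e ∈ M, (y e.1 + y e.2) := Finset.sum_le_sum fun e he => h1 e (hM.1 he)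
    _ = ∑ v ∈ S, y v := hsum.symm
    _ ≤ ∑ v ∈ G.verts, y v := Finset.sum_le_sum_of_subset_of_nonneg hSsub
        (fun v hv _ => h0 v hv)

set_option linter.unusedSectionVars false
set_option maxHeartbeats 1000000

noncomputable def nbr (G : FinGraph α) (x : α) : Finset α :=
  (G.edges.filter (fun e => e.1 = x)).image Prod.snd

noncomputable def nbrS (G : FinGraph α) (S : Finset α) : Finset α :=
  S.biUnion (nbr G)

lemma mem_nbr {G : FinGraph α} {x y : α} : y ∈ nbr G x ↔ (x, y) ∈ G.edges := by
  simp only [nbr, Finset.mem_image, Finset.mem_filter]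
  constructor
  · rintro ⟨e, ⟨he, h1⟩, h2⟩
    have : e = (x, y) := by rw [← h1, ← h2]
    rwa [← this]
  · intro h; exact ⟨(x, y), ⟨h, rfl⟩, rfl⟩

/-- König: there is a vertex cover of size nu -/
lemma exists_cover (G : FinGraph α) (Vs Vt : Finset α) (hd : Disjoint Vs Vt)
    (hWF : G.WF) (hbip : G.Bipartition Vs Vt) :
    ∃ C : Finset α, C ⊆ G.verts ∧ (∀ e ∈ G.edges, e.1 ∈ C ∨ e.2 ∈ C) ∧
      C.card = G.nu := by
  classical
  set X : Finset α := G.verts ∩ Vs with hX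
  have hPne : (X.powerset).Nonempty := ⟨∅, Finset.empty_mem_powerset X⟩
  set f : Finset α → ℤ := fun S => (S.card : ℤ) - ((nbrS G S).card : ℤ) with hf
  obtain ⟨Sm, hSm, hSmmax⟩ := Finset.exists_mem_eq_sup' hPne f
  set dZ : ℤ := X.powerset.sup' hPne f with hdZ
  have hdZ0 : 0 ≤ dZ := by
    have h := Finset.le_sup' f (Finset.empty_mem_powerset X)
    have h0 : f ∅ = 0 := by simp [hf, nbrS]
    exact le_trans (le_of_eq h0.symm) h
  set d : ℕ := dZ.toNat with hdnat
  have hdcast : (d : ℤ) = dZ := Int.toNat_of_nonneg hdZ0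
  have hdefle : ∀ S ∈ X.powerset, (S.card : ℤ) - ((nbrS G S).card : ℤ) ≤ (d : ℤ) := by
    intro S hS; rw [hdcast]; exact Finset.le_sup' f hS
  -- Hall's theorem on X with d dummy vertices
  set t : {x // x ∈ X} → Finset (α ⊕ ℕ) := fun x =>
    (nbr G x.1).map ⟨Sum.inl, Sum.inl_injective⟩ ∪
    (Finset.range d).map ⟨Sum.inr, Sum.inr_injective⟩ with ht
  have hall : ∀ s : Finset {x // x ∈ X}, s.card ≤ (s.biUnion t).card := by
    intro s
    rcases s.eq_empty_or_nonempty with rfl | hsne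
    · simp
    set S : Finset α := s.image Subtype.val with hSdef
    have hcards : s.card = S.card := (Finset.card_image_of_injective s Subtype.val_injective).symm
    have hsub : (nbrS G S).map ⟨Sum.inl, Sum.inl_injective⟩ ∪
        (Finset.range d).map ⟨Sum.inr, Sum.inr_injective⟩ ⊆ s.biUnion t := by
      intro z hz
      rcases Finset.mem_union.1 hz with hz | hz
      · obtain ⟨y, hy, rfl⟩ := Finset.mem_map.1 hz
        obtain ⟨x, hxS, hyx⟩ := Finset.mem_biUnion.1 hy
        obtain ⟨x', hx's, rfl⟩ := Finset.mem_image.1 hxS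
        refine Finset.mem_biUnion.2 ⟨x', hx's, ?_⟩
        exact Finset.mem_union_left _ (Finset.mem_map_of_mem _ hyx)
      · obtain ⟨x0, hx0⟩ := hsne
        exact Finset.mem_biUnion.2 ⟨x0, hx0, Finset.mem_union_right _ hz⟩
    have hSX : S ∈ X.powerset := by
      refine Finset.mem_powerset.2 fun x hx => ?_
      obtain ⟨x', _, rfl⟩ := Finset.mem_image.1 hx
      exact x'.2
    have hdisj2 : Disjoint ((nbrS G S).map ⟨Sum.inl, Sum.inl_injective⟩)
        ((Finset.range d).map ⟨Sum.inr, Sum.inr_injective⟩) := by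
      simp [Finset.disjoint_left]
    have hcard1 := Finset.card_le_card hsub
    rw [Finset.card_union_of_disjoint hdisj2, Finset.card_map, Finset.card_map,
      Finset.card_range] at hcard1
    have hle : (S.card : ℤ) ≤ ((nbrS G S).card : ℤ) + d := by
      have := hdefle S hSX; omega
    have : S.card ≤ (nbrS G S).card + d := by exact_mod_cast hle
    omega
  obtain ⟨F, hFinj, hFmem⟩ :=
    (Finset.all_card_le_biUnion_card_iff_exists_injective t).1 hall
  -- build a matching from F
  set M : Finset (α × α) := X.attach.biUnion (fun x =>
    Sum.elim (fun y => ({(x.1, y)} : Finset (α × α))) (fun _ => ∅) (F x)) with hM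
  have hmemM : ∀ e ∈ M, ∃ h : e.1 ∈ X, F ⟨e.1, h⟩ = Sum.inl e.2 := by
    intro e he
    obtain ⟨x, _, hex⟩ := Finset.mem_biUnion.1 he
    rcases hFx : F x with y | n
    · rw [hFx] at hex
      simp only [Sum.elim_inl, Finset.mem_singleton] at hex
      subst hex
      exact ⟨x.2, hFx⟩
    · rw [hFx] at hex; simp at hex
  have hMedge : M ⊆ G.edges := by
    intro e he
    obtain ⟨h, hF⟩ := hmemM e he
    have hmem := hFmem ⟨e.1, h⟩
    rw [hF] at hmem
    rcases Finset.mem_union.1 hmem with h2 | h2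
    · obtain ⟨y, hy, hyeq⟩ := Finset.mem_map.1 h2
      simp only [Function.Embedding.coeFn_mk, Sum.inl.injEq] at hyeq
      subst hyeq
      exact mem_nbr.1 hy
    · obtain ⟨n, _, hn⟩ := Finset.mem_map.1 h2
      simp at hn
  have hfstVs : ∀ e ∈ M, e.1 ∈ Vs := fun e he => (hbip.2 e (hMedge he)).1
  have hsndVt : ∀ e ∈ M, e.2 ∈ Vt := fun e he => (hbip.2 e (hMedge he)).2
  have hMmatch : G.IsMatching M := by
    refine ⟨hMedge, fun e he g hg hne => ?_⟩
    obtain ⟨h1, hF1⟩ := hmemM e he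
    obtain ⟨h2, hF2⟩ := hmemM g hg
    have hfst : e.1 ≠ g.1 := by
      intro hfst
      apply hne
      have hsub : (⟨e.1, h1⟩ : {x // x ∈ X}) = ⟨g.1, h2⟩ := by simp [hfst]
      rw [hsub, hF2] at hF1
      exact Prod.ext hfst (Sum.inl.inj hF1.symm)
    have hsnd : e.2 ≠ g.2 := by
      intro hsnd
      apply hfst
      have : F ⟨e.1, h1⟩ = F ⟨g.1, h2⟩ := by rw [hF1, hF2, hsnd]
      exact congrArg Subtype.val (hFinj this)
    have hst : e.1 ≠ g.2 := fun hh => Finset.disjoint_left.1 hd (hfstVs e he)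
      (hh ▸ hsndVt g hg)
    have hts : e.2 ≠ g.1 := fun hh => Finset.disjoint_left.1 hd (hfstVs g hg)
      (hh ▸ hsndVt e he) |>.elim
    exact ⟨hfst, hst, fun hh => (Finset.disjoint_left.1 hd (hfstVs g hg)
      (hh ▸ hsndVt e he)).elim, hsnd⟩
  -- card M ≥ X.card - d
  have hMcard : (X.card : ℤ) - d ≤ (M.card : ℤ) := by
    have hdisjM : ∀ x ∈ X.attach, ∀ x' ∈ X.attach, x ≠ x' →
        Disjoint (Sum.elim (fun y => ({(x.1, y)} : Finset (α × α))) (fun _ => ∅) (F x))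
          (Sum.elim (fun y => ({(x'.1, y)} : Finset (α × α))) (fun _ => ∅) (F x')) := by
      intro x _ x' _ hxx'
      rcases F x with y | n <;> rcases F x' with y' | n' <;> simp
      intro h _
      exact hxx' h
    have hcardM : M.card = ∑ x ∈ X.attach,
        (Sum.elim (fun y => ({(x.1, y)} : Finset (α × α))) (fun _ => ∅) (F x)).card :=
      Finset.card_biUnion hdisjM
    set R : Finset {x // x ∈ X} := X.attach.filter (fun x => (F x).isRight) with hR
    have hRcard : R.card ≤ d := by
      have hinj : ∀ x ∈ R, ∀ x' ∈ R, Sum.elim (fun _ => 0) id (F x) =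
          Sum.elim (fun _ => 0) id (F x') → x = x' := by
        intro x hx x' hx' heq
        simp only [hR, Finset.mem_filter] at hx hx'
        obtain ⟨n, hn⟩ := Sum.isRight_iff.1 hx.2
        obtain ⟨n', hn'⟩ := Sum.isRight_iff.1 hx'.2
        rw [hn, hn'] at heq
        simp only [Sum.elim_inr, id] at heq
        apply hFinj
        rw [hn, hn', heq]
      have hmemR : ∀ x ∈ R, Sum.elim (fun _ => 0) id (F x) ∈ Finset.range d := by
        intro x hx
        simp only [hR, Finset.mem_filter] at hx
        obtain ⟨n, hn⟩ := Sum.isRight_iff.1 hx.2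
        have hmem := hFmem x
        rw [hn] at hmem ⊢
        simp only [Sum.elim_inr, id]
        rcases Finset.mem_union.1 hmem with h2 | h2
        · obtain ⟨y, _, hy⟩ := Finset.mem_map.1 h2
          simp at hy
        · obtain ⟨m, hm, hmeq⟩ := Finset.mem_map.1 h2
          simp only [Function.Embedding.coeFn_mk, Sum.inr.injEq] at hmeq
          rwa [← hmeq]
      calc R.card ≤ (Finset.range d).card := Finset.card_le_card_of_injOn _ hmemR hinj
        _ = d := Finset.card_range d
    have hMeq : M.card = (X.attach.filter (fun x => ¬(F x).isRight = true)).card := by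
      have hptw : ∀ x ∈ X.attach,
          (Sum.elim (fun y => ({(x.1, y)} : Finset (α × α))) (fun _ => ∅) (F x)).card
          = if (F x).isRight = true then 0 else 1 := by
        intro x _
        rcases F x with y | n <;> simp
      rw [hcardM, Finset.sum_congr rfl hptw, Finset.sum_ite, Finset.sum_const,
        Finset.sum_const]
      simp
    have hsplit := Finset.card_filter_add_card_filter_not
      (s := X.attach) (p := fun x => (F x).isRight = true)
    rw [hR] at hRcard
    have hattach : X.attach.card = X.card := Finset.card_attach
    omega
  have hnuM : (X.card : ℤ) - d ≤ (G.nu : ℤ) := by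
    have := card_le_nu hMmatch
    omega
  -- the cover
  set C : Finset α := (X \ Sm) ∪ nbrS G Sm with hC
  have hnbrVt : ∀ y ∈ nbrS G Sm, y ∈ Vt := by
    intro y hy
    obtain ⟨x, _, hyx⟩ := Finset.mem_biUnion.1 hy
    exact (hbip.2 _ (mem_nbr.1 hyx)).2
  have hnbrverts : ∀ y ∈ nbrS G Sm, y ∈ G.verts := by
    intro y hy
    obtain ⟨x, _, hyx⟩ := Finset.mem_biUnion.1 hy
    exact (hWF _ (mem_nbr.1 hyx)).2.1
  have hCsub : C ⊆ G.verts := by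
    intro v hv
    rcases Finset.mem_union.1 hv with hv | hv
    · exact (Finset.mem_inter.1 (Finset.mem_sdiff.1 hv).1).1
    · exact hnbrverts v hv
  have hCcover : ∀ e ∈ G.edges, e.1 ∈ C ∨ e.2 ∈ C := by
    intro e he
    have he1X : e.1 ∈ X := Finset.mem_inter.2 ⟨(hWF e he).1, (hbip.2 e he).1⟩
    by_cases h : e.1 ∈ Sm
    · right
      exact Finset.mem_union_right _ (Finset.mem_biUnion.2 ⟨e.1, h, mem_nbr.2 (by
        rwa [show ((e.1 : α), (e.2 : α)) = e from rfl])⟩)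
    · left
      exact Finset.mem_union_left _ (Finset.mem_sdiff.2 ⟨he1X, h⟩)
  have hCcard : (C.card : ℤ) = (X.card : ℤ) - d := by
    have hdisjC : Disjoint (X \ Sm) (nbrS G Sm) := by
      refine Finset.disjoint_left.2 fun v hv hv' => ?_
      have hvVs : v ∈ Vs := (Finset.mem_inter.1 (Finset.mem_sdiff.1 hv).1).2
      exact Finset.disjoint_left.1 hd hvVs (hnbrVt v hv')
    have hSmX : Sm ⊆ X := Finset.mem_powerset.1 hSm
    have h1 : C.card = (X \ Sm).card + (nbrS G Sm).card :=
      Finset.card_union_of_disjoint hdisjC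
    have h2 : (X \ Sm).card = X.card - Sm.card := Finset.card_sdiff_of_subset hSmX
    have h3 : Sm.card ≤ X.card := Finset.card_le_card hSmX
    have h4 : (Sm.card : ℤ) - ((nbrS G Sm).card : ℤ) = dZ := by
      have h5 : f Sm = dZ := hSmmax.symm
      simp only [hf] at h5
      exact h5
    omega
  -- nu ≤ C.card via weak duality with the indicator vector
  have hnuC : (G.nu : ℤ) ≤ C.card := by
    have hfrac := nu_le_frac_cover G hWF (fun v => if v ∈ C then (1 : ℝ) else 0)
      (fun v _ => by positivity)
      (fun e he => by
        rcases hCcover e he with h | h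
        · simp only [h, if_true]
          have : (0:ℝ) ≤ if e.2 ∈ C then (1:ℝ) else 0 := by positivity
          linarith
        · simp only [h, if_true]
          have : (0:ℝ) ≤ if e.1 ∈ C then (1:ℝ) else 0 := by positivity
          linarith)
    have hsum : ∑ v ∈ G.verts, (if v ∈ C then (1 : ℝ) else 0) = C.card := by
      rw [Finset.sum_ite_mem, Finset.sum_const]
      rw [Finset.inter_eq_right.2 hCsub]
      simp
    rw [hsum] at hfrac
    exact_mod_cast hfrac
  have : (C.card : ℤ) = G.nu := by omega
  exact ⟨C, hCsub, hCcover, by exact_mod_cast this⟩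


end AuxKonig


section AuxMain

variable {α : Type*} [DecidableEq α]

lemma min1_cover {x y : ℝ} (hx : 0 ≤ x) (hy : 0 ≤ y) (h : 1 ≤ x + y) :
    1 ≤ min x 1 + min y 1 := by
  rcases le_total x 1 with h1 | h1
  · rcases le_total y 1 with h2 | h2
    · rw [min_eq_left h1, min_eq_left h2]; linarith
    · rw [min_eq_left h1, min_eq_right h2]; linarith
  · rcases le_total y 1 with h2 | h2
    · rw [min_eq_right h1, min_eq_left h2]; linarith
    · rw [min_eq_right h1, min_eq_right h2]; linarith

lemma min1_diff {x y δ : ℝ} (hy : 0 ≤ y) (hδ : 0 ≤ δ) (h : x - y ≤ δ) :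
    min x 1 - min y 1 ≤ min δ 1 := by
  refine le_min ?_ ?_
  · rcases le_total y 1 with h2 | h2
    · rw [min_eq_left h2]
      have := min_le_left x 1
      linarith
    · rw [min_eq_right h2]
      have := min_le_right x 1
      linarith
  · have h1 := min_le_right x 1
    have h2 : 0 ≤ min y 1 := le_min hy zero_le_one
    linarith

lemma IntegralReal.sum {γ : Type*} {s : Finset γ} {g : γ → ℝ}
    (h : ∀ x ∈ s, IntegralReal (g x)) : IntegralReal (∑ x ∈ s, g x) := by
  classical
  refine Finset.sum_induction g IntegralReal ?_ ⟨0, by simp⟩ h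
  rintro x y ⟨m, rfl⟩ ⟨n, rfl⟩
  exact ⟨m + n, by push_cast; ring⟩

lemma IntegralReal.min1 {x : ℝ} (h : IntegralReal x) : IntegralReal (min x 1) := by
  obtain ⟨n, rfl⟩ := h
  exact ⟨min n 1, by rw [← Int.cast_one, Int.cast_min]⟩

lemma unit_prod_diff {t x y : ℝ} (hx0 : 0 ≤ x) (hx1 : x ≤ 1) (hy0 : 0 ≤ y) (hy1 : y ≤ 1) :
    t * x - t * y ≤ |t| := by
  rcases le_total 0 t with h | h
  · rw [abs_of_nonneg h]; nlinarith
  · rw [abs_of_nonpos h]; nlinarith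

end AuxMain

/-- Let `a^i` be arbitrary and `β^i, b^i` nonnegative coefficient vectors,
and let `ε = 1/(1 + Σᵢ Σ_{V_i}|a^i| + Σᵢ Σ_{V_i ∩ V_{i+1}}(β^i + b^i))`.  If `μ̂` is an integral
minimizer over the region `D_k` of the objective
`F_ε(μ) = Σᵢ Σ_{V_i} y^i + ε·(Σᵢ Σ a^i y^i + Σᵢ Σ (β^i δ^i + b^i d^i))`, then `μ̂` satisfies the
matching-number equalities (hence `μ̂ ∈ P_k`) and minimizes
`G(μ) = Σᵢ Σ a^i y^i + Σᵢ Σ (β^i δ^i + b^i d^i)` over `P_k`. -/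
theorem integral_minimizer_regionDk_minimizes_regionPk [DecidableEq α]
    (k : ℕ) (hk : 1 ≤ k) (G : ℕ → FinGraph α) (Vs Vt : Finset α)
    (hdisj : Disjoint Vs Vt)
    (hWF : ∀ i < k, (G i).WF) (hbip : ∀ i < k, (G i).Bipartition Vs Vt)
    (a β b : ℕ → α → ℝ)
    (hβ : ∀ i, i + 1 < k → ∀ v ∈ (G i).verts ∩ (G (i + 1)).verts, 0 ≤ β i v)
    (hb : ∀ i, i + 1 < k → ∀ v ∈ (G i).verts ∩ (G (i + 1)).verts, 0 ≤ b i v)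
    (ε : ℝ)
    (hε : ε = 1 / (1 + ∑ i ∈ Finset.range k, ∑ v ∈ (G i).verts, |a i v|
        + ∑ i ∈ Finset.range (k - 1), ∑ v ∈ (G i).verts ∩ (G (i + 1)).verts,
            (β i v + b i v)))
    (μ : MultiStagePt α)
    (hint1 : ∀ i < k, ∀ v ∈ (G i).verts, IntegralReal (μ.1 i v))
    (hint2 : ∀ i, i + 1 < k → ∀ v ∈ (G i).verts ∩ (G (i + 1)).verts,
        IntegralReal (μ.2.1 i v) ∧ IntegralReal (μ.2.2 i v))
    (hmem : μ ∈ regionDk k G)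
    (hmin : ∀ p ∈ regionDk k G,
        (∑ i ∈ Finset.range k, ∑ v ∈ (G i).verts, μ.1 i v)
            + ε * objCk k G a β b μ ≤
          (∑ i ∈ Finset.range k, ∑ v ∈ (G i).verts, p.1 i v)
            + ε * objCk k G a β b p) :
    (∀ i < k, ∑ v ∈ (G i).verts, μ.1 i v = ((G i).nu : ℝ)) ∧
    μ ∈ regionPk k G ∧
    ∀ p ∈ regionPk k G, objCk k G a β b μ ≤ objCk k G a β b p := by
  classical
  obtain ⟨hm1, hm2⟩ := hmem
  set A : ℝ := (∑ i ∈ Finset.range k, ∑ v ∈ (G i).verts, |a i v|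
      + ∑ i ∈ Finset.range (k - 1), ∑ v ∈ (G i).verts ∩ (G (i + 1)).verts,
          (β i v + b i v)) with hA
  have hε' : ε = 1 / (1 + A) := by
    rw [hε, hA, add_assoc]
  have hib : ∀ i ∈ Finset.range (k - 1), i + 1 < k := by
    intro i hi; have := Finset.mem_range.1 hi; omega
  have hsum1nn : (0:ℝ) ≤ ∑ i ∈ Finset.range k, ∑ v ∈ (G i).verts, |a i v| :=
    Finset.sum_nonneg fun i _ => Finset.sum_nonneg fun v _ => abs_nonneg _
  have hsum2nn : (0:ℝ) ≤ ∑ i ∈ Finset.range (k - 1),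
      ∑ v ∈ (G i).verts ∩ (G (i + 1)).verts, (β i v + b i v) :=
    Finset.sum_nonneg fun i hi => Finset.sum_nonneg fun v hv =>
      add_nonneg (hβ i (hib i hi) v hv) (hb i (hib i hi) v hv)
  have hA0 : 0 ≤ A := by rw [hA]; linarith
  have h1A : (0:ℝ) < 1 + A := by linarith
  have hεpos : 0 < ε := by rw [hε']; exact one_div_pos.2 h1A
  have hεmul : ε * (1 + A) = 1 := by rw [hε']; field_simp
  have hεA : ε * A < 1 := by nlinarith
  have habs : ∀ i ∈ Finset.range k, ∀ v ∈ (G i).verts, |a i v| ≤ A := by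
    intro i hi v hv
    have h1 : |a i v| ≤ ∑ v ∈ (G i).verts, |a i v| :=
      Finset.single_le_sum (f := fun v => |a i v|) (fun v _ => abs_nonneg _) hv
    have h2 : ∑ v ∈ (G i).verts, |a i v| ≤
        ∑ i ∈ Finset.range k, ∑ v ∈ (G i).verts, |a i v| :=
      Finset.single_le_sum (f := fun i => ∑ v ∈ (G i).verts, |a i v|)
        (fun i _ => Finset.sum_nonneg fun v _ => abs_nonneg _) hi
    rw [hA]; linarith
  -- the covers
  have hcov : ∀ i, ∃ Ci : Finset α, i < k → (Ci ⊆ (G i).verts ∧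
      (∀ e ∈ (G i).edges, e.1 ∈ Ci ∨ e.2 ∈ Ci) ∧ Ci.card = (G i).nu) := by
    intro i
    by_cases hi : i < k
    · obtain ⟨Ci, hCi⟩ := exists_cover (G i) Vs Vt hdisj (hWF i hi) (hbip i hi)
      exact ⟨Ci, fun _ => hCi⟩
    · exact ⟨∅, fun h => absurd h hi⟩
  choose C hC using hcov
  set pstar : MultiStagePt α :=
    (fun i v => if v ∈ C i then (1:ℝ) else 0, fun _ _ => (1:ℝ), fun _ _ => (1:ℝ)) with hpstar
  set mup : MultiStagePt α :=
    (fun i v => min (μ.1 i v) 1, fun i v => min (μ.2.1 i v) 1,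
      fun i v => min (μ.2.2 i v) 1) with hmup
  have hpD : pstar ∈ regionDk k G := by
    refine ⟨fun i hi => ⟨fun v hv => ?_, fun e he => ?_⟩, fun i hi v hv => ?_⟩
    · simp only [hpstar]; split_ifs <;> norm_num
    · simp only [hpstar]
      have h1 : (0:ℝ) ≤ if e.1 ∈ C i then (1:ℝ) else 0 := by split_ifs <;> norm_num
      have h2 : (0:ℝ) ≤ if e.2 ∈ C i then (1:ℝ) else 0 := by split_ifs <;> norm_num
      rcases (hC i hi).2.1 e he with h | h
      · rw [if_pos h]; linarith
      · rw [if_pos h]; linarith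
    · simp only [hpstar]
      refine ⟨?_, ?_, by norm_num, by norm_num⟩ <;> split_ifs <;> norm_num
  have hmD : mup ∈ regionDk k G := by
    refine ⟨fun i hi => ⟨fun v hv => ?_, fun e he => ?_⟩, fun i hi v hv => ?_⟩
    · simp only [hmup]; exact le_min ((hm1 i hi).1 v hv) zero_le_one
    · simp only [hmup]
      exact min1_cover ((hm1 i hi).1 _ (hWF i hi e he).1)
        ((hm1 i hi).1 _ (hWF i hi e he).2.1) ((hm1 i hi).2 e he)
    · have h := hm2 i hi v hv
      have hv2 : v ∈ (G (i + 1)).verts := (Finset.mem_inter.1 hv).2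
      have hv1 : v ∈ (G i).verts := (Finset.mem_inter.1 hv).1
      have h0 : 0 ≤ μ.1 (i + 1) v := (hm1 (i + 1) hi).1 v hv2
      have h0' : 0 ≤ μ.1 i v := (hm1 i (by omega)).1 v hv1
      simp only [hmup]
      exact ⟨min1_diff h0 h.2.2.1 h.1, min1_diff h0' h.2.2.2 h.2.1,
        le_min h.2.2.1 zero_le_one, le_min h.2.2.2 zero_le_one⟩
  -- sum abbreviations
  set s1 : ℝ := ∑ i ∈ Finset.range k, ∑ v ∈ (G i).verts, μ.1 i v with hs1
  set s1' : ℝ := ∑ i ∈ Finset.range k, ∑ v ∈ (G i).verts, min (μ.1 i v) 1 with hs1'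
  set s2 : ℝ := ∑ i ∈ Finset.range k, ∑ v ∈ (G i).verts, a i v * μ.1 i v with hs2
  set s2' : ℝ := ∑ i ∈ Finset.range k, ∑ v ∈ (G i).verts, a i v * min (μ.1 i v) 1 with hs2'
  set s3 : ℝ := ∑ i ∈ Finset.range (k - 1), ∑ v ∈ (G i).verts ∩ (G (i + 1)).verts,
      (β i v * μ.2.1 i v + b i v * μ.2.2 i v) with hs3
  set s3' : ℝ := ∑ i ∈ Finset.range (k - 1), ∑ v ∈ (G i).verts ∩ (G (i + 1)).verts,
      (β i v * min (μ.2.1 i v) 1 + b i v * min (μ.2.2 i v) 1) with hs3'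
  set n1 : ℝ := ∑ i ∈ Finset.range k, ((G i).nu : ℝ) with hn1
  set c2 : ℝ := ∑ i ∈ Finset.range k, ∑ v ∈ (G i).verts,
      a i v * (if v ∈ C i then (1:ℝ) else 0) with hc2
  set c3 : ℝ := ∑ i ∈ Finset.range (k - 1), ∑ v ∈ (G i).verts ∩ (G (i + 1)).verts,
      (β i v * 1 + b i v * 1) with hc3
  have hobjμ : objCk k G a β b μ = s2 + s3 := rfl
  have hobjm : objCk k G a β b mup = s2' + s3' := rfl
  have hobjp : objCk k G a β b pstar = c2 + c3 := rfl
  have hP1m : (∑ i ∈ Finset.range k, ∑ v ∈ (G i).verts, mup.1 i v) = s1' := rfl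
  have hP1p : (∑ i ∈ Finset.range k, ∑ v ∈ (G i).verts, pstar.1 i v) = n1 := by
    rw [hn1]
    refine Finset.sum_congr rfl fun i hi => ?_
    have hsub := (hC i (Finset.mem_range.1 hi)).1
    simp only [hpstar]
    rw [Finset.sum_ite_mem, Finset.inter_eq_right.2 hsub, Finset.sum_const,
      (hC i (Finset.mem_range.1 hi)).2.2]
    simp
  -- basic sum inequalities
  have hs1le : s1' ≤ s1 := by
    rw [hs1, hs1']
    exact Finset.sum_le_sum fun i _ => Finset.sum_le_sum fun v _ => min_le_left _ _
  have hs3le : s3' ≤ s3 := by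
    rw [hs3, hs3']
    refine Finset.sum_le_sum fun i hi => Finset.sum_le_sum fun v hv => ?_
    exact add_le_add (mul_le_mul_of_nonneg_left (min_le_left _ _) (hβ i (hib i hi) v hv))
      (mul_le_mul_of_nonneg_left (min_le_left _ _) (hb i (hib i hi) v hv))
  -- the key inequality
  have hkey2 : ε * s1 - ε * s1' ≤ (s1 - s1') + (ε * s2 - ε * s2') := by
    have hsum : ∑ i ∈ Finset.range k, ∑ v ∈ (G i).verts,
        (ε * (μ.1 i v - min (μ.1 i v) 1)) ≤
        ∑ i ∈ Finset.range k, ∑ v ∈ (G i).verts,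
        ((μ.1 i v - min (μ.1 i v) 1) +
          ε * (a i v * μ.1 i v - a i v * min (μ.1 i v) 1)) := by
      refine Finset.sum_le_sum fun i hi => Finset.sum_le_sum fun v hv => ?_
      have hw : 0 ≤ μ.1 i v - min (μ.1 i v) 1 := sub_nonneg.2 (min_le_left _ _)
      have ha : |a i v| ≤ A := habs i hi v hv
      have hc : ε * (1 + |a i v|) ≤ 1 := by
        have := mul_le_mul_of_nonneg_left (add_le_add_left ha 1) hεpos.le
        linarith
      have hna : -|a i v| ≤ a i v := neg_abs_le _
      have h4 : 0 ≤ (1 - ε * (1 + |a i v|)) * (μ.1 i v - min (μ.1 i v) 1) :=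
        mul_nonneg (by linarith) hw
      have h5 : ε * (-|a i v| * (μ.1 i v - min (μ.1 i v) 1)) ≤
          ε * (a i v * (μ.1 i v - min (μ.1 i v) 1)) :=
        mul_le_mul_of_nonneg_left (mul_le_mul_of_nonneg_right hna hw) hεpos.le
      nlinarith [h4, h5]
    have hL : ∑ i ∈ Finset.range k, ∑ v ∈ (G i).verts,
        (ε * (μ.1 i v - min (μ.1 i v) 1)) = ε * s1 - ε * s1' := by
      rw [hs1, hs1']
      simp only [mul_sub, Finset.sum_sub_distrib, Finset.mul_sum]
    have hR : ∑ i ∈ Finset.range k, ∑ v ∈ (G i).verts,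
        ((μ.1 i v - min (μ.1 i v) 1) +
          ε * (a i v * μ.1 i v - a i v * min (μ.1 i v) 1)) =
        (s1 - s1') + (ε * s2 - ε * s2') := by
      rw [hs1, hs1', hs2, hs2']
      simp only [mul_sub, Finset.sum_add_distrib, Finset.sum_sub_distrib, Finset.mul_sum]
    rw [← hL, ← hR]
    exact hsum
  -- bound on the objective difference
  have hGb : (c2 - s2') + (c3 - s3') ≤ A := by
    have hA2 : c2 - s2' ≤ ∑ i ∈ Finset.range k, ∑ v ∈ (G i).verts, |a i v| := by
      have heq : c2 - s2' = ∑ i ∈ Finset.range k, ∑ v ∈ (G i).verts,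
          (a i v * (if v ∈ C i then (1:ℝ) else 0) - a i v * min (μ.1 i v) 1) := by
        rw [hc2, hs2']
        simp only [Finset.sum_sub_distrib]
      rw [heq]
      refine Finset.sum_le_sum fun i hi => Finset.sum_le_sum fun v hv => ?_
      refine unit_prod_diff ?_ ?_ (le_min ((hm1 i (Finset.mem_range.1 hi)).1 v hv)
        zero_le_one) (min_le_right _ _)
      · split_ifs <;> norm_num
      · split_ifs <;> norm_num
    have hA3 : c3 - s3' ≤ ∑ i ∈ Finset.range (k - 1),
        ∑ v ∈ (G i).verts ∩ (G (i + 1)).verts, (β i v + b i v) := by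
      have heq : c3 - s3' = ∑ i ∈ Finset.range (k - 1),
          ∑ v ∈ (G i).verts ∩ (G (i + 1)).verts,
          ((β i v * 1 + b i v * 1) -
            (β i v * min (μ.2.1 i v) 1 + b i v * min (μ.2.2 i v) 1)) := by
        rw [hc3, hs3']
        simp only [Finset.sum_sub_distrib]
      rw [heq]
      refine Finset.sum_le_sum fun i hi => Finset.sum_le_sum fun v hv => ?_
      have h := hm2 i (hib i hi) v hv
      have hβ0 := hβ i (hib i hi) v hv
      have hb0 := hb i (hib i hi) v hv
      have h1 : 0 ≤ β i v * min (μ.2.1 i v) 1 :=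
        mul_nonneg hβ0 (le_min h.2.2.1 zero_le_one)
      have h2 : 0 ≤ b i v * min (μ.2.2 i v) 1 :=
        mul_nonneg hb0 (le_min h.2.2.2 zero_le_one)
      linarith
    rw [hA]; linarith
  -- use minimality against mup and pstar
  have hminm := hmin mup hmD
  rw [hobjμ, hobjm, hP1m] at hminm
  have hminp := hmin pstar hpD
  rw [hobjμ, hobjp, hP1p] at hminp
  have e1 : ε * (s2 + s3) = ε * s2 + ε * s3 := mul_add _ _ _
  have e2 : ε * (s2' + s3') = ε * s2' + ε * s3' := mul_add _ _ _
  have e3 : ε * (c2 + c3) = ε * c2 + ε * c3 := mul_add _ _ _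
  have hs3ε : ε * s3' ≤ ε * s3 := mul_le_mul_of_nonneg_left hs3le hεpos.le
  -- s1 = s1'
  have hs1eq : s1 = s1' := by
    have h2 : ε * (s1 - s1') ≤ 0 := by
      have hms : ε * (s1 - s1') = ε * s1 - ε * s1' := mul_sub _ _ _
      linarith
    have h3 : s1 ≤ s1' := by
      by_contra hcon
      push_neg at hcon
      have := mul_pos hεpos (sub_pos.2 hcon)
      linarith
    exact le_antisymm h3 hs1le
  -- F(mup) ≤ F(pstar), hence s1' - n1 < 1
  have hdual : s1' + (ε * s2' + ε * s3') ≤ n1 + (ε * c2 + ε * c3) := by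
    have hs2ε : ε * s2' ≤ ε * s2 := by
      have hk := hkey2
      rw [hs1eq] at hk
      linarith
    linarith
  have hεGb : ε * ((c2 - s2') + (c3 - s3')) ≤ ε * A :=
    mul_le_mul_of_nonneg_left hGb hεpos.le
  have hlt : s1' < n1 + 1 := by
    have hexp : ε * ((c2 - s2') + (c3 - s3')) = (ε * c2 - ε * s2') + (ε * c3 - ε * s3') := by
      ring
    linarith
  -- integrality: s1' ≤ n1
  have hintS : IntegralReal s1' := by
    rw [hs1']
    refine IntegralReal.sum fun i hi => IntegralReal.sum fun v hv => ?_
    exact (hint1 i (Finset.mem_range.1 hi) v hv).min1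
  set nnat : ℕ := ∑ i ∈ Finset.range k, (G i).nu with hnnat
  have hn1cast : n1 = (nnat : ℝ) := by rw [hn1, hnnat]; push_cast; ring
  have hS'leN : s1' ≤ n1 := by
    obtain ⟨m, hm⟩ := hintS
    rw [hm, hn1cast]
    have hmlt : (m : ℝ) < (nnat : ℝ) + 1 := by rw [← hm, ← hn1cast]; exact hlt
    have : m < (nnat : ℤ) + 1 := by exact_mod_cast hmlt
    exact_mod_cast (by omega : m ≤ (nnat : ℤ))
  -- stage feasibility for mup
  have hstage : ∀ i ∈ Finset.range k, ((G i).nu : ℝ) ≤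
      ∑ v ∈ (G i).verts, min (μ.1 i v) 1 := by
    intro i hi
    have hik := Finset.mem_range.1 hi
    exact nu_le_frac_cover (G i) (hWF i hik) (fun v => min (μ.1 i v) 1)
      (fun v hv => le_min ((hm1 i hik).1 v hv) zero_le_one)
      (fun e he => min1_cover ((hm1 i hik).1 _ (hWF i hik e he).1)
        ((hm1 i hik).1 _ (hWF i hik e he).2.1) ((hm1 i hik).2 e he))
  have hS'geN : n1 ≤ s1' := by
    rw [hn1, hs1']
    exact Finset.sum_le_sum hstage
  have hS'eqN : s1' = n1 := le_antisymm hS'leN hS'geN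
  -- stagewise equalities for mup
  have hstage_eq : ∀ i ∈ Finset.range k,
      ∑ v ∈ (G i).verts, min (μ.1 i v) 1 = ((G i).nu : ℝ) := by
    have hzero : ∑ i ∈ Finset.range k,
        ((∑ v ∈ (G i).verts, min (μ.1 i v) 1) - ((G i).nu : ℝ)) = 0 := by
      rw [Finset.sum_sub_distrib, ← hs1', ← hn1, hS'eqN, sub_self]
    have := (Finset.sum_eq_zero_iff_of_nonneg
      (fun i hi => sub_nonneg.2 (hstage i hi))).1 hzero
    intro i hi
    have h := this i hi
    linarith [sub_eq_zero.1 h]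
  -- stagewise equalities for μ itself
  have hμstage : ∀ i < k, ∑ v ∈ (G i).verts, μ.1 i v = ((G i).nu : ℝ) := by
    have hzero : ∑ i ∈ Finset.range k,
        ((∑ v ∈ (G i).verts, μ.1 i v) - ∑ v ∈ (G i).verts, min (μ.1 i v) 1) = 0 := by
      rw [Finset.sum_sub_distrib, ← hs1, ← hs1', hs1eq, sub_self]
    have hterm := (Finset.sum_eq_zero_iff_of_nonneg (fun i hi => sub_nonneg.2
      (Finset.sum_le_sum fun v _ => min_le_left _ _))).1 hzero
    intro i hik
    have h := hterm i (Finset.mem_range.2 hik)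
    have h2 := hstage_eq i (Finset.mem_range.2 hik)
    have := sub_eq_zero.1 h
    linarith
  refine ⟨hμstage, ⟨⟨hm1, hm2⟩, hμstage⟩, ?_⟩
  intro p hp
  obtain ⟨hpD', hpeq⟩ := hp
  have hP1peq : (∑ i ∈ Finset.range k, ∑ v ∈ (G i).verts, p.1 i v) = n1 := by
    rw [hn1]
    exact Finset.sum_congr rfl fun i hi => hpeq i (Finset.mem_range.1 hi)
  have hμsum : s1 = n1 := by
    rw [hs1, hn1]
    exact Finset.sum_congr rfl fun i hi => hμstage i (Finset.mem_range.1 hi)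
  have h := hmin p hpD'
  rw [hP1peq] at h
  have h' : ε * objCk k G a β b μ ≤ ε * objCk k G a β b p := by linarith
  exact le_of_mul_le_mul_left h' hεpos
end

section
/- Let k ≥ 1 and let G_1,…,G_k be finite bipartite graphs with a common bipartition. Then the minimum of Σ_{i=1}^{k−1} Σ_{v∈V_i∩V_{i+1}} |1_{C_i}(v) − 1_{C_{i+1}}(v)|, taken over all tuples (C_1,…,C_k) where each C_i ⊆ V_i is a minimum vertex cover of G_i (i.e., |C_i| = ν(G_i)), equals the minimum of Σ_{i=1}^{k−1} Σ_{v∈V_i∩V_{i+1}} (δ^i_v + d^i_v) over the LP feasible region P_k; in particular the multistage LP with unit costs admits an integral optimal solution given by minimum vertex covers of the stages. -/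
open FinGraph

variable {α : Type*}

/-- `C` is a vertex cover of the graph `G`. -/
def FinGraph.IsVertexCover (G : FinGraph α) (C : Finset α) : Prop :=
  ∀ e ∈ G.edges, e.1 ∈ C ∨ e.2 ∈ C


/-! ### Auxiliary machinery -/

section Aux

/-- Clip a real number to `[0,1]`. -/
noncomputable def rclip (x : ℝ) : ℝ := max 0 (min 1 x)

lemma rclip_nonneg (x : ℝ) : 0 ≤ rclip x := le_max_left _ _

lemma rclip_le_one (x : ℝ) : rclip x ≤ 1 := max_le zero_le_one (min_le_left _ _)

lemma rclip_le_self {x : ℝ} (hx : 0 ≤ x) : rclip x ≤ x := max_le hx (min_le_right _ _)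

lemma rclip_lip (a b : ℝ) : |rclip a - rclip b| ≤ |a - b| := by
  unfold rclip
  have h1 : |max 0 (min 1 a) - max 0 (min 1 b)| ≤ |min 1 a - min 1 b| := by
    rw [max_comm 0 (min 1 a), max_comm 0 (min 1 b)]
    exact abs_max_sub_max_le_abs _ _ _
  have h2 : |min 1 a - min 1 b| ≤ |a - b| := by
    have h := abs_min_sub_min_le_max 1 a 1 b
    simpa [max_eq_right (abs_nonneg (a - b))] using h
  exact h1.trans h2

lemma rclip_ind1 {θ y : ℝ} (h0 : 0 < θ) (h1 : θ < 1) : θ ≤ y ↔ θ ≤ rclip y := by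
  unfold rclip
  rw [le_max_iff, le_min_iff]
  constructor
  · intro h; right; exact ⟨h1.le, h⟩
  · rintro (h | ⟨-, h⟩)
    · linarith
    · exact h

lemma rclip_ind2 {θ y : ℝ} (h0 : 0 < θ) (h1 : θ < 1) : θ ≤ 1 - rclip y ↔ θ ≤ 1 - y := by
  unfold rclip
  rcases le_total y 0 with hy | hy
  · rw [min_eq_right (hy.trans zero_le_one), max_eq_left hy]
    constructor <;> intro <;> linarith
  · rcases le_total y 1 with hy1 | hy1
    · rw [min_eq_right hy1, max_eq_right hy]
    · rw [min_eq_left hy1, max_eq_right zero_le_one]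
      constructor <;> intro <;> linarith

lemma max_sub_add_max_sub (a b : ℝ) : max (a - b) 0 + max (b - a) 0 = |a - b| := by
  rcases le_total a b with h | h
  · rw [max_eq_right (by linarith), max_eq_left (by linarith), zero_add, abs_sub_comm,
      abs_of_nonneg (by linarith)]
  · rw [max_eq_left (by linarith), max_eq_right (by linarith), add_zero,
      abs_of_nonneg (by linarith)]

/-! #### The grid of breakpoints -/

noncomputable def gridB (B : Finset ℝ) (j : ℕ) : ℝ :=
  if h : j < B.card then ((B.orderIsoOfFin rfl) ⟨j, h⟩ : ℝ) else 1

lemma gridB_mem (B : Finset ℝ) {j : ℕ} (h : j < B.card) : gridB B j ∈ B := by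
  simp only [gridB, dif_pos h]
  exact ((B.orderIsoOfFin rfl) ⟨j, h⟩).2

lemma gridB_strictMono (B : Finset ℝ) {j j' : ℕ} (h : j < j') (h' : j' < B.card) :
    gridB B j < gridB B j' := by
  have hj : j < B.card := h.trans h'
  simp only [gridB, dif_pos h', dif_pos hj]
  exact_mod_cast (B.orderIsoOfFin rfl).strictMono (show (⟨j, hj⟩ : Fin B.card) < ⟨j', h'⟩ from h)

lemma gridB_mono (B : Finset ℝ) {j j' : ℕ} (h : j ≤ j') (h' : j' < B.card) :
    gridB B j ≤ gridB B j' := by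
  rcases h.lt_or_eq with h | rfl
  · exact (gridB_strictMono B h h').le
  · exact le_rfl

lemma gridB_surj (B : Finset ℝ) {a : ℝ} (ha : a ∈ B) :
    ∃ t, t < B.card ∧ gridB B t = a := by
  obtain ⟨t, ht⟩ := (B.orderIsoOfFin rfl).surjective ⟨a, ha⟩
  exact ⟨t.1, t.2, by simp [gridB, dif_pos t.2, ht]⟩

lemma gridB_zero (B : Finset ℝ) (h0 : (0:ℝ) ∈ B) (hnn : ∀ x ∈ B, (0:ℝ) ≤ x) :
    gridB B 0 = 0 := by
  obtain ⟨t, ht, hbt⟩ := gridB_surj B h0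
  have hc : 0 < B.card := by omega
  refine le_antisymm ?_ (hnn _ (gridB_mem B hc))
  rw [← hbt]
  exact gridB_mono B (Nat.zero_le t) ht

lemma gridB_last (B : Finset ℝ) (h1 : (1:ℝ) ∈ B) (hle : ∀ x ∈ B, x ≤ (1:ℝ)) :
    gridB B (B.card - 1) = 1 := by
  obtain ⟨t, ht, hbt⟩ := gridB_surj B h1
  have h2 : B.card - 1 < B.card := Nat.sub_lt (Nat.pos_of_ne_zero (by omega)) one_pos
  refine le_antisymm (hle _ (gridB_mem B h2)) ?_
  rw [← hbt]
  exact gridB_mono B (by omega) h2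

noncomputable def gridMid (B : Finset ℝ) (j : ℕ) : ℝ := (gridB B j + gridB B (j+1))/2
noncomputable def gridW (B : Finset ℝ) (j : ℕ) : ℝ := gridB B (j+1) - gridB B j

lemma gridW_pos (B : Finset ℝ) {j : ℕ} (h : j + 1 < B.card) : 0 < gridW B j :=
  sub_pos.2 (gridB_strictMono B (Nat.lt_succ_self j) h)

lemma gridW_sum (B : Finset ℝ) (h0 : (0:ℝ) ∈ B) (h1 : (1:ℝ) ∈ B)
    (hnn : ∀ x ∈ B, (0:ℝ) ≤ x) (hle : ∀ x ∈ B, x ≤ (1:ℝ)) :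
    ∑ j ∈ Finset.range (B.card - 1), gridW B j = 1 := by
  unfold gridW
  rw [Finset.sum_range_sub (gridB B) (B.card - 1), gridB_last B h1 hle,
    gridB_zero B h0 hnn, sub_zero]

lemma gridMid_mem_Ioo (B : Finset ℝ) (h0 : (0:ℝ) ∈ B) (h1 : (1:ℝ) ∈ B)
    (hnn : ∀ x ∈ B, (0:ℝ) ≤ x) (hle : ∀ x ∈ B, x ≤ (1:ℝ))
    {j : ℕ} (h : j + 1 < B.card) : 0 < gridMid B j ∧ gridMid B j < 1 := by
  have hlt : gridB B j < gridB B (j+1) := gridB_strictMono B (Nat.lt_succ_self j) h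
  have hj0 : (0:ℝ) ≤ gridB B j := hnn _ (gridB_mem B (by omega))
  have hj1 : gridB B (j+1) ≤ 1 := hle _ (gridB_mem B h)
  constructor <;> (unfold gridMid; nlinarith)

lemma grid_indicator_sum (B : Finset ℝ) (h0 : (0:ℝ) ∈ B)
    (hnn : ∀ x ∈ B, (0:ℝ) ≤ x) {a : ℝ} (ha : a ∈ B) :
    ∑ j ∈ Finset.range (B.card - 1),
      gridW B j * (if gridMid B j ≤ a then (1:ℝ) else 0) = a := by
  obtain ⟨t, ht, rfl⟩ := gridB_surj B ha
  have hgz : gridB B 0 = 0 := gridB_zero B h0 hnn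
  calc ∑ j ∈ Finset.range (B.card - 1),
        gridW B j * (if gridMid B j ≤ gridB B t then (1:ℝ) else 0)
      = ∑ j ∈ Finset.range (B.card - 1), (if j < t then gridW B j else 0) := by
        refine Finset.sum_congr rfl fun j hj => ?_
        rw [Finset.mem_range] at hj
        have hj1 : j + 1 < B.card := by omega
        have hlt : gridB B j < gridB B (j+1) := gridB_strictMono B (Nat.lt_succ_self j) hj1
        by_cases hjt : j < t
        · have h1 : gridB B (j+1) ≤ gridB B t := gridB_mono B (by omega) ht
          have : gridMid B j ≤ gridB B t := by unfold gridMid; linarith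
          simp [this, hjt]
        · have h1 : gridB B t ≤ gridB B j := gridB_mono B (by omega) (by omega)
          have : ¬ gridMid B j ≤ gridB B t := by unfold gridMid; push_neg; linarith
          simp [this, hjt]
    _ = ∑ j ∈ Finset.range t, gridW B j := by
        rw [Finset.sum_ite, Finset.sum_const_zero, add_zero]
        congr 1
        ext j
        simp only [Finset.mem_filter, Finset.mem_range]
        omega
    _ = gridB B t := by
        unfold gridW
        rw [Finset.sum_range_sub (gridB B) t, hgz, sub_zero]

lemma grid_absdiff_sum (B : Finset ℝ) (h0 : (0:ℝ) ∈ B)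
    (hnn : ∀ x ∈ B, (0:ℝ) ≤ x) {a a' : ℝ} (ha : a ∈ B) (ha' : a' ∈ B) :
    ∑ j ∈ Finset.range (B.card - 1),
      gridW B j * |(if gridMid B j ≤ a then (1:ℝ) else 0)
        - (if gridMid B j ≤ a' then (1:ℝ) else 0)| = |a - a'| := by
  have hmax : max a a' ∈ B := by rcases max_cases a a' with ⟨h, _⟩ | ⟨h, _⟩ <;> rw [h] <;> assumption
  have hmin : min a a' ∈ B := by rcases min_cases a a' with ⟨h, _⟩ | ⟨h, _⟩ <;> rw [h] <;> assumption
  have key : ∀ j, |(if gridMid B j ≤ a then (1:ℝ) else 0) - (if gridMid B j ≤ a' then (1:ℝ) else 0)|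
      = (if gridMid B j ≤ max a a' then (1:ℝ) else 0) - (if gridMid B j ≤ min a a' then (1:ℝ) else 0) := by
    intro j
    by_cases hA : gridMid B j ≤ a <;> by_cases hA' : gridMid B j ≤ a' <;>
      simp [hA, hA', le_max_iff, le_min_iff]
  calc ∑ j ∈ Finset.range (B.card - 1), gridW B j * |(if gridMid B j ≤ a then (1:ℝ) else 0)
        - (if gridMid B j ≤ a' then (1:ℝ) else 0)|
      = ∑ j ∈ Finset.range (B.card - 1), (gridW B j * (if gridMid B j ≤ max a a' then (1:ℝ) else 0)
        - gridW B j * (if gridMid B j ≤ min a a' then (1:ℝ) else 0)) := by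
        refine Finset.sum_congr rfl fun j _ => ?_
        rw [key j, mul_sub]
    _ = max a a' - min a a' := by
        rw [Finset.sum_sub_distrib, grid_indicator_sum B h0 hnn hmax,
          grid_indicator_sum B h0 hnn hmin]
    _ = |a - a'| := by rw [max_sub_min_eq_abs a a', abs_sub_comm]

/-! #### Vertex covers and threshold rounding -/

lemma nu_le_card_of_cover [DecidableEq α] (G : FinGraph α) (C : Finset α)
    (hC : G.IsVertexCover C) : G.nu ≤ C.card := by
  classical
  unfold FinGraph.nu
  apply Finset.sup_le
  intro M hM
  simp only [Finset.mem_filter, Finset.mem_powerset] at hM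
  obtain ⟨hsub, hMsub, hdisj⟩ := hM
  apply Finset.card_le_card_of_injOn (fun e => if e.1 ∈ C then e.1 else e.2)
  · intro e he
    rcases hC e (hMsub he) with h | h
    · simp [h]
    · by_cases h1 : e.1 ∈ C <;> simp [h1, h]
  · intro e he f hf hef
    by_contra hne
    have := hdisj e he f hf hne
    by_cases h1 : e.1 ∈ C <;> by_cases h2 : f.1 ∈ C <;>
      simp [h1, h2] at hef <;> tauto

lemma indicator_sum_card [DecidableEq α] (s C : Finset α) (h : C ⊆ s) :
    ∑ v ∈ s, (if v ∈ C then (1:ℝ) else 0) = C.card := by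
  rw [Finset.sum_ite_mem, Finset.inter_eq_right.mpr h, Finset.sum_const, nsmul_eq_mul, mul_one]

open Classical in
/-- The threshold rounding of a fractional cover `y` at threshold `θ`. -/
noncomputable def coverAt [DecidableEq α] (G : FinGraph α) (Vs : Finset α)
    (y : α → ℝ) (θ : ℝ) : Finset α :=
  G.verts.filter (fun v => if v ∈ Vs then θ ≤ y v else 1 - y v < θ)

lemma mem_coverAt [DecidableEq α] {G : FinGraph α} {Vs : Finset α} {y : α → ℝ} {θ : ℝ} {v : α} :
    v ∈ coverAt G Vs y θ ↔ v ∈ G.verts ∧ (if v ∈ Vs then θ ≤ y v else 1 - y v < θ) := by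
  simp [coverAt]

lemma coverAt_subset [DecidableEq α] (G : FinGraph α) (Vs : Finset α) (y : α → ℝ) (θ : ℝ) :
    coverAt G Vs y θ ⊆ G.verts := Finset.filter_subset _ _

lemma coverAt_isCover [DecidableEq α] {G : FinGraph α} {Vs Vt : Finset α}
    (hdisj : Disjoint Vs Vt) (hWF : G.WF) (hbip : G.Bipartition Vs Vt)
    {y : α → ℝ} (hy : ∀ e ∈ G.edges, 1 ≤ y e.1 + y e.2) (θ : ℝ) :
    G.IsVertexCover (coverAt G Vs y θ) := by
  intro e he
  obtain ⟨h1v, h2v, -⟩ := hWF e he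
  obtain ⟨h1s, h2t⟩ := hbip.2 e he
  have h2ns : e.2 ∉ Vs := fun h => (Finset.disjoint_left.1 hdisj) h h2t
  by_cases hθ : θ ≤ y e.1
  · left
    rw [mem_coverAt, if_pos h1s]
    exact ⟨h1v, hθ⟩
  · right
    have := hy e he
    rw [mem_coverAt, if_neg h2ns]
    push_neg at hθ
    exact ⟨h2v, by linarith⟩

end Aux

open Classical in
lemma exists_cover_le [DecidableEq α]
    (k : ℕ) (hk : 1 ≤ k) (G : ℕ → FinGraph α) (Vs Vt : Finset α)
    (hdisj : Disjoint Vs Vt)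
    (hWF : ∀ i < k, (G i).WF) (hbip : ∀ i < k, (G i).Bipartition Vs Vt)
    (p : MultiStagePt α) (hp : p ∈ regionPk k G) :
    ∃ C : ℕ → Finset α,
      (∀ i < k, C i ⊆ (G i).verts ∧ (G i).IsVertexCover (C i) ∧ (C i).card = (G i).nu) ∧
      ∑ i ∈ Finset.range (k - 1), ∑ v ∈ (G i).verts ∩ (G (i + 1)).verts,
          |(if v ∈ C i then (1 : ℝ) else 0) - (if v ∈ C (i + 1) then (1 : ℝ) else 0)|
        ≤ ∑ i ∈ Finset.range (k - 1), ∑ v ∈ (G i).verts ∩ (G (i + 1)).verts,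
          (p.2.1 i v + p.2.2 i v) := by
  simp only [regionPk, regionDk, Set.mem_setOf_eq, Set.mem_sep_iff] at hp
  obtain ⟨⟨hcov, hdd⟩, hpEq⟩ := hp
  set B : Finset ℝ := insert 0 (insert 1
      (((Finset.range k).biUnion fun i => (G i).verts.image fun v => rclip (p.1 i v)) ∪
       ((Finset.range k).biUnion fun i => (G i).verts.image fun v => 1 - rclip (p.1 i v))))
    with hBdef
  have h0B : (0:ℝ) ∈ B := by simp [hBdef]
  have h1B : (1:ℝ) ∈ B := by simp [hBdef]
  have hnn : ∀ x ∈ B, (0:ℝ) ≤ x := by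
    intro x hx
    simp only [hBdef, Finset.mem_insert, Finset.mem_union, Finset.mem_biUnion,
      Finset.mem_image, Finset.mem_range] at hx
    rcases hx with rfl | rfl | ⟨i, -, v, -, rfl⟩ | ⟨i, -, v, -, rfl⟩
    · exact le_refl 0
    · exact zero_le_one
    · exact rclip_nonneg _
    · linarith [rclip_le_one (p.1 i v)]
  have hle : ∀ x ∈ B, x ≤ (1:ℝ) := by
    intro x hx
    simp only [hBdef, Finset.mem_insert, Finset.mem_union, Finset.mem_biUnion,
      Finset.mem_image, Finset.mem_range] at hx
    rcases hx with rfl | rfl | ⟨i, -, v, -, rfl⟩ | ⟨i, -, v, -, rfl⟩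
    · exact zero_le_one
    · exact le_refl 1
    · exact rclip_le_one _
    · linarith [rclip_nonneg (p.1 i v)]
  have haB : ∀ i < k, ∀ v ∈ (G i).verts, rclip (p.1 i v) ∈ B := by
    intro i hi v hv
    simp only [hBdef, Finset.mem_insert, Finset.mem_union, Finset.mem_biUnion,
      Finset.mem_image, Finset.mem_range]
    exact Or.inr (Or.inr (Or.inl ⟨i, hi, v, hv, rfl⟩))
  have hxB : ∀ i < k, ∀ v ∈ (G i).verts, 1 - rclip (p.1 i v) ∈ B := by
    intro i hi v hv
    simp only [hBdef, Finset.mem_insert, Finset.mem_union, Finset.mem_biUnion,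
      Finset.mem_image, Finset.mem_range]
    exact Or.inr (Or.inr (Or.inr ⟨i, hi, v, hv, rfl⟩))
  have hn2 : 1 < B.card := Finset.one_lt_card.2 ⟨0, h0B, 1, h1B, by norm_num⟩
  have hrange : ∀ j ∈ Finset.range (B.card - 1), j + 1 < B.card := by
    intro j hj; rw [Finset.mem_range] at hj; omega
  have hne : (Finset.range (B.card - 1)).Nonempty := by
    rw [Finset.nonempty_range_iff]; omega
  have hmid : ∀ j ∈ Finset.range (B.card - 1), 0 < gridMid B j ∧ gridMid B j < 1 :=
    fun j hj => gridMid_mem_Ioo B h0B h1B hnn hle (hrange j hj)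
  -- the rounded covers
  set Cov : ℕ → ℕ → Finset α := fun j i => coverAt (G i) Vs (p.1 i) (gridMid B j) with hCov
  -- indicator identity
  have hind : ∀ j ∈ Finset.range (B.card - 1), ∀ i < k, ∀ v ∈ (G i).verts,
      (if v ∈ Cov j i then (1:ℝ) else 0) =
        if v ∈ Vs then (if gridMid B j ≤ rclip (p.1 i v) then (1:ℝ) else 0)
        else 1 - (if gridMid B j ≤ 1 - rclip (p.1 i v) then (1:ℝ) else 0) := by
    intro j hj i hi v hv
    obtain ⟨hm0, hm1⟩ := hmid j hj
    by_cases hvs : v ∈ Vs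
    · rw [if_pos hvs]
      have hmem : v ∈ Cov j i ↔ gridMid B j ≤ p.1 i v := by
        rw [hCov]; rw [mem_coverAt, if_pos hvs]
        exact ⟨fun h => h.2, fun h => ⟨hv, h⟩⟩
      rw [rclip_ind1 hm0 hm1] at hmem
      by_cases hc : gridMid B j ≤ rclip (p.1 i v)
      · rw [if_pos (hmem.2 hc), if_pos hc]
      · rw [if_neg (fun h => hc (hmem.1 h)), if_neg hc]
    · rw [if_neg hvs]
      have hmem : v ∈ Cov j i ↔ 1 - p.1 i v < gridMid B j := by
        rw [hCov]; rw [mem_coverAt, if_neg hvs]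
        exact ⟨fun h => h.2, fun h => ⟨hv, h⟩⟩
      have h2 := rclip_ind2 (y := p.1 i v) hm0 hm1
      by_cases hc : gridMid B j ≤ 1 - rclip (p.1 i v)
      · have hnot : ¬ (1 - p.1 i v < gridMid B j) := not_lt.2 (h2.mp hc)
        rw [if_neg (fun h => hnot (hmem.1 h)), if_pos hc]
        norm_num
      · have hlt : 1 - p.1 i v < gridMid B j := not_le.1 (fun hcon => hc (h2.mpr hcon))
        rw [if_pos (hmem.2 hlt), if_neg hc]
        norm_num
  -- every rounded cover has exactly nu vertices
  have hcard : ∀ i < k, ∀ j ∈ Finset.range (B.card - 1),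
      ((Cov j i).card : ℝ) = ((G i).nu : ℝ) := by
    intro i hi
    have havg : ∑ j ∈ Finset.range (B.card - 1), gridW B j * ((Cov j i).card : ℝ)
        = ∑ v ∈ (G i).verts, rclip (p.1 i v) := by
      calc ∑ j ∈ Finset.range (B.card - 1), gridW B j * ((Cov j i).card : ℝ)
          = ∑ j ∈ Finset.range (B.card - 1), ∑ v ∈ (G i).verts,
              gridW B j * (if v ∈ Cov j i then (1:ℝ) else 0) := by
            refine Finset.sum_congr rfl fun j hj => ?_
            rw [← Finset.mul_sum,
              indicator_sum_card (G i).verts (Cov j i) (coverAt_subset _ _ _ _)]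
        _ = ∑ v ∈ (G i).verts, ∑ j ∈ Finset.range (B.card - 1),
              gridW B j * (if v ∈ Cov j i then (1:ℝ) else 0) := Finset.sum_comm
        _ = ∑ v ∈ (G i).verts, rclip (p.1 i v) := by
            refine Finset.sum_congr rfl fun v hv => ?_
            by_cases hvs : v ∈ Vs
            · rw [Finset.sum_congr rfl fun j hj => by
                rw [hind j hj i hi v hv, if_pos hvs]]
              exact grid_indicator_sum B h0B hnn (haB i hi v hv)
            · rw [Finset.sum_congr rfl fun j hj => by
                rw [hind j hj i hi v hv, if_neg hvs]]
              have : ∀ j ∈ Finset.range (B.card - 1),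
                  gridW B j * (1 - (if gridMid B j ≤ 1 - rclip (p.1 i v) then (1:ℝ) else 0))
                  = gridW B j - gridW B j * (if gridMid B j ≤ 1 - rclip (p.1 i v) then (1:ℝ) else 0) := by
                intro j hj; ring
              rw [Finset.sum_congr rfl this, Finset.sum_sub_distrib,
                gridW_sum B h0B h1B hnn hle,
                grid_indicator_sum B h0B hnn (hxB i hi v hv)]
              ring
    have hub : ∑ v ∈ (G i).verts, rclip (p.1 i v) ≤ ((G i).nu : ℝ) := by
      rw [← hpEq i hi]
      exact Finset.sum_le_sum fun v hv => rclip_le_self ((hcov i hi).1 v hv)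
    have hlb : ∀ j ∈ Finset.range (B.card - 1), ((G i).nu : ℝ) ≤ ((Cov j i).card : ℝ) := by
      intro j hj
      exact_mod_cast nu_le_card_of_cover (G i) (Cov j i)
        (coverAt_isCover hdisj (hWF i hi) (hbip i hi) (hcov i hi).2 _)
    have hterm : ∀ j ∈ Finset.range (B.card - 1),
        0 ≤ gridW B j * (((Cov j i).card : ℝ) - ((G i).nu : ℝ)) := by
      intro j hj
      exact mul_nonneg (gridW_pos B (hrange j hj)).le (by linarith [hlb j hj])
    have hsum0 : ∑ j ∈ Finset.range (B.card - 1),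
        gridW B j * (((Cov j i).card : ℝ) - ((G i).nu : ℝ)) = 0 := by
      have heq : ∑ j ∈ Finset.range (B.card - 1),
          gridW B j * (((Cov j i).card : ℝ) - ((G i).nu : ℝ))
          = (∑ j ∈ Finset.range (B.card - 1), gridW B j * ((Cov j i).card : ℝ))
            - (∑ j ∈ Finset.range (B.card - 1), gridW B j) * ((G i).nu : ℝ) := by
        rw [Finset.sum_mul, ← Finset.sum_sub_distrib]
        exact Finset.sum_congr rfl fun j _ => by ring
      refine le_antisymm ?_ (Finset.sum_nonneg hterm)
      rw [heq, gridW_sum B h0B h1B hnn hle, havg, one_mul]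
      linarith
    intro j hj
    have := (Finset.sum_eq_zero_iff_of_nonneg hterm).1 hsum0 j hj
    have hw := gridW_pos B (hrange j hj)
    rcases mul_eq_zero.1 this with h | h
    · linarith
    · linarith
  -- average movement bounded by the objective
  have hmove : ∑ j ∈ Finset.range (B.card - 1), gridW B j *
      (∑ i ∈ Finset.range (k - 1), ∑ v ∈ (G i).verts ∩ (G (i + 1)).verts,
        |(if v ∈ Cov j i then (1:ℝ) else 0) - (if v ∈ Cov j (i+1) then (1:ℝ) else 0)|)
      ≤ ∑ i ∈ Finset.range (k - 1), ∑ v ∈ (G i).verts ∩ (G (i + 1)).verts,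
          (p.2.1 i v + p.2.2 i v) := by
    calc ∑ j ∈ Finset.range (B.card - 1), gridW B j *
        (∑ i ∈ Finset.range (k - 1), ∑ v ∈ (G i).verts ∩ (G (i + 1)).verts,
          |(if v ∈ Cov j i then (1:ℝ) else 0) - (if v ∈ Cov j (i+1) then (1:ℝ) else 0)|)
        = ∑ i ∈ Finset.range (k - 1), ∑ v ∈ (G i).verts ∩ (G (i + 1)).verts,
            ∑ j ∈ Finset.range (B.card - 1), gridW B j *
              |(if v ∈ Cov j i then (1:ℝ) else 0) - (if v ∈ Cov j (i+1) then (1:ℝ) else 0)| := by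
          simp only [Finset.mul_sum]
          rw [Finset.sum_comm]
          exact Finset.sum_congr rfl fun i _ => Finset.sum_comm
      _ ≤ ∑ i ∈ Finset.range (k - 1), ∑ v ∈ (G i).verts ∩ (G (i + 1)).verts,
            (p.2.1 i v + p.2.2 i v) := by
          refine Finset.sum_le_sum fun i hi => Finset.sum_le_sum fun v hv => ?_
          rw [Finset.mem_range] at hi
          have hik : i < k := by omega
          have hik1 : i + 1 < k := by omega
          rw [Finset.mem_inter] at hv
          obtain ⟨hv1, hv2⟩ := hv
          have hdd' := hdd i hik1 v (Finset.mem_inter.2 ⟨hv1, hv2⟩)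
          have hbound : |p.1 i v - p.1 (i+1) v| ≤ p.2.1 i v + p.2.2 i v := by
            rw [abs_sub_le_iff]
            constructor
            · linarith [hdd'.1, hdd'.2.2.2]
            · linarith [hdd'.2.1, hdd'.2.2.1]
          have hclip : |rclip (p.1 i v) - rclip (p.1 (i+1) v)| ≤ p.2.1 i v + p.2.2 i v :=
            (rclip_lip _ _).trans hbound
          by_cases hvs : v ∈ Vs
          · have heq : ∑ j ∈ Finset.range (B.card - 1), gridW B j *
                |(if v ∈ Cov j i then (1:ℝ) else 0) - (if v ∈ Cov j (i+1) then (1:ℝ) else 0)|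
                = |rclip (p.1 i v) - rclip (p.1 (i+1) v)| := by
              rw [Finset.sum_congr rfl fun j hj => by
                rw [hind j hj i hik v hv1, hind j hj (i+1) hik1 v hv2, if_pos hvs, if_pos hvs]]
              exact grid_absdiff_sum B h0B hnn (haB i hik v hv1) (haB (i+1) hik1 v hv2)
            rw [heq]; exact hclip
          · have heq : ∑ j ∈ Finset.range (B.card - 1), gridW B j *
                |(if v ∈ Cov j i then (1:ℝ) else 0) - (if v ∈ Cov j (i+1) then (1:ℝ) else 0)|
                = |(1 - rclip (p.1 i v)) - (1 - rclip (p.1 (i+1) v))| := by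
              rw [Finset.sum_congr rfl fun j hj => by
                rw [hind j hj i hik v hv1, hind j hj (i+1) hik1 v hv2, if_neg hvs, if_neg hvs,
                  show (1 - (if gridMid B j ≤ 1 - rclip (p.1 i v) then (1:ℝ) else 0))
                    - (1 - (if gridMid B j ≤ 1 - rclip (p.1 (i+1) v) then (1:ℝ) else 0))
                    = -((if gridMid B j ≤ 1 - rclip (p.1 i v) then (1:ℝ) else 0)
                      - (if gridMid B j ≤ 1 - rclip (p.1 (i+1) v) then (1:ℝ) else 0)) by ring,
                  abs_neg]]
              exact grid_absdiff_sum B h0B hnn (hxB i hik v hv1) (hxB (i+1) hik1 v hv2)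
            rw [heq]
            have : |(1 - rclip (p.1 i v)) - (1 - rclip (p.1 (i+1) v))|
                = |rclip (p.1 i v) - rclip (p.1 (i+1) v)| := by
              rw [show (1 - rclip (p.1 i v)) - (1 - rclip (p.1 (i+1) v))
                = -(rclip (p.1 i v) - rclip (p.1 (i+1) v)) by ring, abs_neg]
            rw [this]; exact hclip
  -- pick a good threshold index
  have hexists : ∃ j0 ∈ Finset.range (B.card - 1),
      (∑ i ∈ Finset.range (k - 1), ∑ v ∈ (G i).verts ∩ (G (i + 1)).verts,
        |(if v ∈ Cov j0 i then (1:ℝ) else 0) - (if v ∈ Cov j0 (i+1) then (1:ℝ) else 0)|)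
      ≤ ∑ i ∈ Finset.range (k - 1), ∑ v ∈ (G i).verts ∩ (G (i + 1)).verts,
          (p.2.1 i v + p.2.2 i v) := by
    by_contra hcon
    push_neg at hcon
    have hlt : ∑ j ∈ Finset.range (B.card - 1), gridW B j *
        (∑ i ∈ Finset.range (k - 1), ∑ v ∈ (G i).verts ∩ (G (i + 1)).verts,
          (p.2.1 i v + p.2.2 i v))
        < ∑ j ∈ Finset.range (B.card - 1), gridW B j *
        (∑ i ∈ Finset.range (k - 1), ∑ v ∈ (G i).verts ∩ (G (i + 1)).verts,
          |(if v ∈ Cov j i then (1:ℝ) else 0) - (if v ∈ Cov j (i+1) then (1:ℝ) else 0)|) := by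
      refine Finset.sum_lt_sum_of_nonempty hne fun j hj => ?_
      exact mul_lt_mul_of_pos_left (hcon j hj) (gridW_pos B (hrange j hj))
    rw [← Finset.sum_mul, gridW_sum B h0B h1B hnn hle, one_mul] at hlt
    linarith
  obtain ⟨j0, hj0, hle0⟩ := hexists
  refine ⟨fun i => Cov j0 i, fun i hi => ⟨coverAt_subset _ _ _ _,
    coverAt_isCover hdisj (hWF i hi) (hbip i hi) (hcov i hi).2 _, ?_⟩, hle0⟩
  exact_mod_cast hcard i hi j0 hj0

lemma sInf_image_eq_aux {S T : Set ℝ} (hbdd : BddBelow T) (hST : S ⊆ T)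
    (hTS : ∀ t ∈ T, ∃ s ∈ S, s ≤ t) : sInf S = sInf T := by
  by_cases hS : S.Nonempty
  · obtain ⟨x, hx⟩ := hS
    have hTne : T.Nonempty := ⟨x, hST hx⟩
    refine le_antisymm ?_ (csInf_le_csInf hbdd ⟨x, hx⟩ hST)
    refine le_csInf hTne fun t ht => ?_
    obtain ⟨s, hs, hst⟩ := hTS t ht
    exact (csInf_le (hbdd.mono hST) hs).trans hst
  · rw [Set.not_nonempty_iff_eq_empty] at hS
    have hT : T = ∅ := by
      rw [Set.eq_empty_iff_forall_notMem]
      intro t ht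
      obtain ⟨s, hs, -⟩ := hTS t ht
      rw [hS] at hs
      exact hs
    rw [hS, hT]
/-- For bipartite graphs `G_1, …, G_k` with a common bipartition, the minimum
of `Σ_{i} Σ_{v ∈ V_i ∩ V_{i+1}} |1_{C_i}(v) - 1_{C_{i+1}}(v)|` over all tuples of minimum vertex
covers `C_i` of `G_i` equals the minimum of `Σ_{i} Σ_{v ∈ V_i ∩ V_{i+1}} (δ^i_v + d^i_v)` over
the LP feasible region `P_k`; in particular the multistage LP with unit costs admits an integral
optimal solution given by minimum vertex covers of the stages. -/
theorem multistage_vertexCover_eq_LP [DecidableEq α]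
    (k : ℕ) (hk : 1 ≤ k) (G : ℕ → FinGraph α) (Vs Vt : Finset α)
    (hdisj : Disjoint Vs Vt)
    (hWF : ∀ i < k, (G i).WF) (hbip : ∀ i < k, (G i).Bipartition Vs Vt) :
    sInf ((fun C : ℕ → Finset α =>
        ∑ i ∈ Finset.range (k - 1), ∑ v ∈ (G i).verts ∩ (G (i + 1)).verts,
          |(if v ∈ C i then (1 : ℝ) else 0) - (if v ∈ C (i + 1) then (1 : ℝ) else 0)|) ''
      {C | ∀ i < k, C i ⊆ (G i).verts ∧ (G i).IsVertexCover (C i) ∧ (C i).card = (G i).nu})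
    = sInf ((fun p : MultiStagePt α =>
        ∑ i ∈ Finset.range (k - 1), ∑ v ∈ (G i).verts ∩ (G (i + 1)).verts,
          (p.2.1 i v + p.2.2 i v)) '' regionPk k G) := by
  classical
  refine sInf_image_eq_aux ?_ ?_ ?_
  · -- the LP objective values are bounded below by 0
    refine ⟨0, ?_⟩
    rintro x ⟨p, hp, rfl⟩
    simp only [regionPk, regionDk, Set.mem_setOf_eq, Set.mem_sep_iff] at hp
    obtain ⟨⟨-, hdd⟩, -⟩ := hp
    refine Finset.sum_nonneg fun i hi => Finset.sum_nonneg fun v hv => ?_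
    rw [Finset.mem_range] at hi
    have h := hdd i (by omega) v hv
    linarith [h.2.2.1, h.2.2.2]
  · -- every minimum-vertex-cover tuple yields an LP point of the same value
    rintro x ⟨C, hC, rfl⟩
    simp only [Set.mem_setOf_eq] at hC
    refine ⟨⟨fun i v => if v ∈ C i then (1:ℝ) else 0,
      fun i v => max ((if v ∈ C i then (1:ℝ) else 0) - (if v ∈ C (i+1) then (1:ℝ) else 0)) 0,
      fun i v => max ((if v ∈ C (i+1) then (1:ℝ) else 0) - (if v ∈ C i then (1:ℝ) else 0)) 0⟩,
      ?_, ?_⟩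
    · simp only [regionPk, regionDk, Set.mem_setOf_eq, Set.mem_sep_iff]
      refine ⟨⟨fun i hi => ⟨fun v _ => by positivity, fun e he => ?_⟩,
        fun i hi1 v hv => ⟨le_max_left _ _, le_max_left _ _, le_max_right _ _,
          le_max_right _ _⟩⟩, fun i hi => ?_⟩
      · rcases (hC i hi).2.1 e he with h | h
        · have h2 : (0:ℝ) ≤ if e.2 ∈ C i then (1:ℝ) else 0 := by positivity
          rw [if_pos h]; linarith
        · have h2 : (0:ℝ) ≤ if e.1 ∈ C i then (1:ℝ) else 0 := by positivity
          rw [if_pos h]; linarith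
      · rw [indicator_sum_card _ _ (hC i hi).1, (hC i hi).2.2]
    · exact Finset.sum_congr rfl fun i _ => Finset.sum_congr rfl fun v _ =>
        max_sub_add_max_sub _ _
  · -- every LP point dominates some minimum-vertex-cover tuple
    rintro t ⟨p, hp, rfl⟩
    obtain ⟨C, hC, hle'⟩ := exists_cover_le k hk G Vs Vt hdisj hWF hbip p hp
    exact ⟨_, ⟨C, hC, rfl⟩, hle'⟩
end
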